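/- For every integer n > 0, e_3p(n) = (1/6) ( n^3 * p(n) - Σ_{k=1}^{n} ( 3n * σ_2(k) - 2 * σ_3(k) ) * p(n-k) ). -/

import Mathlib

open Finset

/-- `e_j p(n)`, the sum of the `j`-th elementary symmetric polynomial evaluated at the
parts over all partitions of `n`. -/
def ejp (j n : ℕ) : ℕ := ∑ π : Nat.Partition n, π.parts.esymm j

/-- `σ_j(n)`, the sum of the `j`-th powers of the divisors of `n`. -/
def sigmaPow (j n : ℕ) : ℕ := ∑ d ∈ n.divisors, d ^ j

lemma esymm_cons {R : Type*} [CommSemiring R] (a : R) (s : Multiset R) (k : ℕ) :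
    (a ::ₘ s).esymm (k+1) = s.esymm (k+1) + a * s.esymm k := by
  simp [Multiset.esymm, Multiset.powersetCard_cons, Multiset.sum_map_mul_left]

lemma esymm_zero' {R : Type*} [CommSemiring R] (s : Multiset R) : s.esymm 0 = 1 := by
  simp [Multiset.esymm]

lemma esymm_one' {R : Type*} [CommSemiring R] (s : Multiset R) : s.esymm 1 = s.sum := by
  simp [Multiset.esymm, Multiset.powersetCard_one, Multiset.map_map]

lemma esymm_map_cast (s : Multiset ℕ) (k : ℕ) :
    ((s.esymm k : ℕ) : ℚ) = (s.map (Nat.cast : ℕ → ℚ)).esymm k := by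
  induction s using Multiset.induction generalizing k with
  | empty =>
    cases k with
    | zero => simp [esymm_zero']
    | succ k => simp [Multiset.esymm, Multiset.powersetCard_zero_right]
  | cons a s ih =>
    cases k with
    | zero => simp [esymm_zero']
    | succ k => rw [Multiset.map_cons, esymm_cons, esymm_cons]; push_cast [← ih]; ring

lemma newton2 (t : Multiset ℚ) :
    2 * t.esymm 2 = t.sum^2 - (t.map (·^2)).sum := by
  induction t using Multiset.induction with
  | empty => simp [Multiset.esymm, Multiset.powersetCard_zero_right 1]
  | cons a s ih =>
    rw [show (2:ℕ) = 1+1 from rfl] at *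
    rw [esymm_cons, esymm_one', Multiset.map_cons, Multiset.sum_cons, Multiset.sum_cons]
    rw [mul_add, ih]; ring

lemma newton3 (t : Multiset ℚ) :
    6 * t.esymm 3 = t.sum^3 - 3*t.sum*(t.map (·^2)).sum + 2*(t.map (·^3)).sum := by
  induction t using Multiset.induction with
  | empty => simp [Multiset.esymm, Multiset.powersetCard_zero_right 2]
  | cons a s ih =>
    rw [show (3:ℕ) = 2+1 from rfl] at *
    rw [esymm_cons, Multiset.map_cons, Multiset.map_cons, Multiset.sum_cons,
      Multiset.sum_cons, Multiset.sum_cons, mul_add, ih]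
    have h2 := newton2 s
    linear_combination 3*a*h2


/-- Remove/add one copy of `d`. -/
def consEquiv (n d m : ℕ) (hd : 0 < d) (hdn : d ≤ n) :
    {π : Nat.Partition n // m + 1 ≤ π.parts.count d} ≃
    {π : Nat.Partition (n - d) // m ≤ π.parts.count d} where
  toFun := fun ⟨π, hπ⟩ =>
    ⟨⟨π.parts.erase d,
      fun {i} hi => π.parts_pos (Multiset.mem_of_mem_erase hi),
      by
        have hmem : d ∈ π.parts := Multiset.count_pos.mp (by omega)
        have h := Multiset.sum_erase (s := π.parts) (a := d) hmem
        have h2 := π.parts_sum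
        omega⟩,
      by
        have hmem : d ∈ π.parts := Multiset.count_pos.mp (by omega)
        rw [Multiset.count_erase_self]
        omega⟩
  invFun := fun ⟨π, hπ⟩ =>
    ⟨⟨d ::ₘ π.parts,
      fun {i} hi => by
        rcases Multiset.mem_cons.mp hi with h | h
        · omega
        · exact π.parts_pos h,
      by rw [Multiset.sum_cons, π.parts_sum]; omega⟩,
      by rw [Multiset.count_cons_self]; omega⟩
  left_inv := fun ⟨π, hπ⟩ => by
    have hmem : d ∈ π.parts := Multiset.count_pos.mp (by omega)
    exact Subtype.ext (Nat.Partition.ext (Multiset.cons_erase hmem))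
  right_inv := fun ⟨π, hπ⟩ => by
    exact Subtype.ext (Nat.Partition.ext (Multiset.erase_cons_head d π.parts))

lemma count_mul_le (n d : ℕ) (π : Nat.Partition n) : π.parts.count d * d ≤ n := by
  have h1 : Multiset.replicate (π.parts.count d) d ≤ π.parts :=
    Multiset.le_count_iff_replicate_le.mp le_rfl
  obtain ⟨u, hu⟩ := Multiset.le_iff_exists_add.mp h1
  have h2 := π.parts_sum
  rw [hu, Multiset.sum_add, Multiset.sum_replicate, smul_eq_mul] at h2
  omega

lemma card_count_ge (d m : ℕ) (hd : 0 < d) : ∀ (n : ℕ), m * d ≤ n →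
    Fintype.card {π : Nat.Partition n // m ≤ π.parts.count d} =
    Fintype.card (Nat.Partition (n - m * d)) := by
  induction m with
  | zero =>
    intro n _
    simp only [Nat.zero_mul, Nat.sub_zero]
    exact Fintype.card_congr (Equiv.subtypeUnivEquiv fun _ => Nat.zero_le _)
  | succ m ih =>
    intro n h
    have he : (m+1)*d = m*d + d := by ring
    have hdn : d ≤ n := by omega
    have hnd : n - d - m * d = n - (m + 1) * d := by omega
    rw [Fintype.card_congr (consEquiv n d m hd hdn), ih (n - d) (by omega), hnd]

lemma card_count_ge_zero (n d m : ℕ) (hd : 0 < d) (hm : 0 < m) (h : n < m * d) :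
    Fintype.card {π : Nat.Partition n // m ≤ π.parts.count d} = 0 := by
  rw [Fintype.card_eq_zero_iff]
  constructor
  rintro ⟨π, hπ⟩
  have := count_mul_le n d π
  have : m * d ≤ π.parts.count d * d := Nat.mul_le_mul_right d hπ
  omega

lemma sum_count (n d : ℕ) (hd : 0 < d) :
    ∑ π : Nat.Partition n, π.parts.count d =
      ∑ m ∈ Icc 1 n, (if m * d ≤ n then Fintype.card (Nat.Partition (n - m * d)) else 0) := by
  have key : ∀ π : Nat.Partition n, π.parts.count d =
      ∑ m ∈ Icc 1 n, (if m ≤ π.parts.count d then 1 else 0) := by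
    intro π
    have hc : π.parts.count d ≤ n := by
      have := count_mul_le n d π
      nlinarith
    rw [← Finset.sum_filter]
    have : (Icc 1 n).filter (fun m => m ≤ π.parts.count d) = Icc 1 (π.parts.count d) := by
      ext m; simp only [mem_filter, mem_Icc]; omega
    rw [this, Finset.sum_const, Nat.card_Icc, smul_eq_mul]; omega
  rw [Finset.sum_congr rfl fun π _ => key π, Finset.sum_comm]
  refine Finset.sum_congr rfl fun m hm => ?_
  rw [mem_Icc] at hm
  rw [← Finset.sum_filter, Finset.sum_const, smul_eq_mul, mul_one, ← Fintype.card_subtype]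
  split_ifs with h
  · exact card_count_ge d m hd n h
  · exact card_count_ge_zero n d m hd (by omega) (by omega)

lemma parts_pow_sum (n j : ℕ) (π : Nat.Partition n) (hn : 0 < n) :
    (π.parts.map (fun x => x ^ j)).sum = ∑ d ∈ Icc 1 n, π.parts.count d * d ^ j := by
  rw [Finset.sum_multiset_map_count]
  refine Finset.sum_subset ?_ ?_
  · intro x hx
    rw [Multiset.mem_toFinset] at hx
    rw [mem_Icc]
    refine ⟨π.parts_pos hx, ?_⟩
    have := Multiset.single_le_sum (fun y _ => Nat.zero_le y) x hx
    rw [π.parts_sum] at this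
    exact this
  · intro x _ hx
    rw [Multiset.mem_toFinset] at hx
    simp [Multiset.count_eq_zero_of_notMem hx]

lemma power_sum_formula (n j : ℕ) (hn : 0 < n) :
    ∑ π : Nat.Partition n, (π.parts.map (fun x => x ^ j)).sum =
      ∑ k ∈ Icc 1 n, sigmaPow j k * Fintype.card (Nat.Partition (n - k)) := by
  calc ∑ π : Nat.Partition n, (π.parts.map (fun x => x ^ j)).sum
      = ∑ π : Nat.Partition n, ∑ d ∈ Icc 1 n, π.parts.count d * d ^ j :=
        Finset.sum_congr rfl fun π _ => parts_pow_sum n j π hn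
    _ = ∑ d ∈ Icc 1 n, (∑ π : Nat.Partition n, π.parts.count d) * d ^ j := by
        rw [Finset.sum_comm]
        exact Finset.sum_congr rfl fun d _ => (Finset.sum_mul ..).symm
    _ = ∑ d ∈ Icc 1 n, ∑ m ∈ Icc 1 n,
          (if m * d ≤ n then Fintype.card (Nat.Partition (n - m * d)) * d ^ j else 0) := by
        refine Finset.sum_congr rfl fun d hd => ?_
        rw [mem_Icc] at hd
        rw [sum_count n d (by omega), Finset.sum_mul]
        exact Finset.sum_congr rfl fun m _ => by split_ifs <;> simp
    _ = ∑ p ∈ (Icc 1 n ×ˢ Icc 1 n).filter (fun p => p.2 * p.1 ≤ n),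
          Fintype.card (Nat.Partition (n - p.2 * p.1)) * p.1 ^ j := by
        rw [Finset.sum_filter, Finset.sum_product]
    _ = ∑ q ∈ (Icc 1 n).sigma (fun k => k.divisorsAntidiagonal),
          Fintype.card (Nat.Partition (n - q.1)) * q.2.1 ^ j := by
        refine Finset.sum_nbij' (fun p => ⟨p.2 * p.1, (p.1, p.2)⟩)
          (fun q => (q.2.1, q.2.2)) ?_ ?_ ?_ ?_ ?_
        · rintro ⟨d, m⟩ hp
          simp only [mem_filter, mem_product, mem_Icc] at hp
          simp only [Finset.mem_sigma, mem_Icc, Nat.mem_divisorsAntidiagonal]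
          obtain ⟨⟨⟨hd1, _⟩, ⟨hm1, _⟩⟩, hmd⟩ := hp
          refine ⟨⟨Nat.one_le_iff_ne_zero.mpr (Nat.mul_ne_zero (by omega) (by omega)), hmd⟩,
            by ring, Nat.mul_ne_zero (by omega) (by omega)⟩
        · rintro ⟨k, d, e⟩ hq
          simp only [Finset.mem_sigma, mem_Icc, Nat.mem_divisorsAntidiagonal] at hq
          obtain ⟨⟨hk1, hkn⟩, hde, hk0⟩ := hq
          simp only [mem_filter, mem_product, mem_Icc]
          have hd0 : 0 < d := by
            rcases Nat.eq_zero_or_pos d with h | h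
            · subst h; simp at hde; omega
            · exact h
          have he0 : 0 < e := by
            rcases Nat.eq_zero_or_pos e with h | h
            · subst h; simp at hde; omega
            · exact h
          have hdk : d ≤ k := by calc d = d * 1 := (mul_one d).symm
                                     _ ≤ d * e := Nat.mul_le_mul_left d he0
                                     _ = k := hde
          have hek : e ≤ k := by calc e = 1 * e := (one_mul e).symm
                                     _ ≤ d * e := Nat.mul_le_mul_right e hd0
                                     _ = k := hde
          refine ⟨⟨⟨hd0, le_trans hdk hkn⟩, ⟨he0, le_trans hek hkn⟩⟩, ?_⟩
          rw [mul_comm]; omega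
        · rintro ⟨d, m⟩ _; rfl
        · rintro ⟨k, d, e⟩ hq
          simp only [Finset.mem_sigma, mem_Icc, Nat.mem_divisorsAntidiagonal] at hq
          have : e * d = k := by rw [mul_comm]; exact hq.2.1
          simp [this]
        · rintro ⟨d, m⟩ _; rfl
    _ = ∑ k ∈ Icc 1 n, sigmaPow j k * Fintype.card (Nat.Partition (n - k)) := by
        rw [Finset.sum_sigma]
        refine Finset.sum_congr rfl fun k hk => ?_
        rw [mul_comm (sigmaPow j k), sigmaPow, Finset.mul_sum]
        rw [← Nat.sum_divisorsAntidiagonal (fun d e => Fintype.card (Nat.Partition (n - k)) * d ^ j)]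

lemma cast_pow_sum (s : Multiset ℕ) (j : ℕ) :
    (((s.map (fun x => x ^ j)).sum : ℕ) : ℚ) =
      ((s.map (Nat.cast : ℕ → ℚ)).map (fun x => x ^ j)).sum := by
  simp [Multiset.map_map, Function.comp_def, Nat.cast_multiset_sum]

theorem e3p_formula (n : ℕ) (hn : 0 < n) :
    (ejp 3 n : ℚ) =
      (1 / 6) * ((n : ℚ) ^ 3 * (Fintype.card (Nat.Partition n) : ℚ) -
        ∑ k ∈ Finset.Icc 1 n,
          (3 * (n : ℚ) * (sigmaPow 2 k : ℚ) - 2 * (sigmaPow 3 k : ℚ)) *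
            (Fintype.card (Nat.Partition (n - k)) : ℚ)) := by
  have key : ∀ π : Nat.Partition n, ((π.parts.esymm 3 : ℕ) : ℚ) =
      (1/6) * ((n:ℚ)^3 - 3*(n:ℚ)*(((π.parts.map (fun x => x^2)).sum : ℕ) : ℚ)
        + 2*(((π.parts.map (fun x => x^3)).sum : ℕ) : ℚ)) := by
    intro π
    have hS : ((π.parts.map (Nat.cast : ℕ → ℚ)).sum) = (n:ℚ) := by
      rw [← Nat.cast_multiset_sum, π.parts_sum]
    have h3 := newton3 (π.parts.map (Nat.cast : ℕ → ℚ))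
    rw [hS, ← cast_pow_sum, ← cast_pow_sum] at h3
    rw [esymm_map_cast]
    linarith [h3]
  have h2 := power_sum_formula n 2 hn
  have h3 := power_sum_formula n 3 hn
  have hejp : (ejp 3 n : ℚ) = ∑ π : Nat.Partition n, ((π.parts.esymm 3 : ℕ) : ℚ) := by
    rw [ejp]; push_cast; rfl
  have hA : ∑ π : Nat.Partition n, (((π.parts.map (fun x => x^2)).sum : ℕ) : ℚ) =
      ∑ k ∈ Icc 1 n, (sigmaPow 2 k : ℚ) * (Fintype.card (Nat.Partition (n-k)) : ℚ) := by
    exact_mod_cast congrArg (Nat.cast : ℕ → ℚ) h2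
  have hB : ∑ π : Nat.Partition n, (((π.parts.map (fun x => x^3)).sum : ℕ) : ℚ) =
      ∑ k ∈ Icc 1 n, (sigmaPow 3 k : ℚ) * (Fintype.card (Nat.Partition (n-k)) : ℚ) := by
    exact_mod_cast congrArg (Nat.cast : ℕ → ℚ) h3
  rw [hejp, Finset.sum_congr rfl fun π _ => key π, ← Finset.mul_sum,
    Finset.sum_add_distrib, Finset.sum_sub_distrib, Finset.sum_const,
    ← Finset.mul_sum, ← Finset.mul_sum, hA, hB]
  have hR : ∑ k ∈ Finset.Icc 1 n,
      (3 * (n : ℚ) * (sigmaPow 2 k : ℚ) - 2 * (sigmaPow 3 k : ℚ)) *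
        (Fintype.card (Nat.Partition (n - k)) : ℚ) =
      3 * (n:ℚ) * (∑ k ∈ Icc 1 n, (sigmaPow 2 k : ℚ) * (Fintype.card (Nat.Partition (n-k)) : ℚ))
      - 2 * (∑ k ∈ Icc 1 n, (sigmaPow 3 k : ℚ) * (Fintype.card (Nat.Partition (n-k)) : ℚ)) := by
    rw [Finset.mul_sum, Finset.mul_sum, ← Finset.sum_sub_distrib]
    refine Finset.sum_congr rfl fun k _ => ?_
    ring
  rw [hR, nsmul_eq_mul, Finset.card_univ]
  ring
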